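/- For the 3-uniform hypergraph P' obtained from the tight path on n vertices by adding the edges {v_2,v_3,v_6}, {v_1,v_2,v_5}, {v_1,v_4,v_6}, and for n a sufficiently large multiple of 3, the Ramsey number satisfies R(P', F) > 2n, where F is the Fano plane. -/

import Mathlib

open Finset

def fanoLines : Finset (Finset (Fin 7)) :=
  {({0,1,2} : Finset (Fin 7)), {0,3,4}, {0,5,6}, {1,3,5}, {1,4,6}, {2,3,6}, {2,4,5}}

def HasBlueFano {α : Type*} [DecidableEq α] (blue : Finset α → Prop) : Prop :=
  ∃ f : Fin 7 → α, Function.Injective f ∧ ∀ L ∈ fanoLines, blue (L.image f)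

/-- A red copy of `P'`: the tight path on `n` vertices with extra edges `{v₂,v₃,v₆}`,
`{v₁,v₂,v₅}`, `{v₁,v₄,v₆}` (1-indexed; here 0-indexed). -/
def HasRedPprime {α : Type*} [DecidableEq α] (red : Finset α → Prop) (n : ℕ) : Prop :=
  ∃ f : ℕ → α, (∀ i < n, ∀ j < n, f i = f j → i = j) ∧
    (∀ i, i + 2 < n → red ({f i, f (i + 1), f (i + 2)} : Finset α)) ∧
    red {f 1, f 2, f 5} ∧ red {f 0, f 1, f 4} ∧ red {f 0, f 3, f 5}

/-- The red triple patterns (as multisets of colors in `Fin 3`): `{X,X,X}` or `{X,X,X+1}`. -/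
def RedP (a b c : Fin 3) : Prop :=
  (a = b ∧ (c = a ∨ c = a + 1)) ∨ (a = c ∧ (b = a ∨ b = a + 1)) ∨
    (b = c ∧ (a = b ∨ a = b + 1))

instance : ∀ a b c, Decidable (RedP a b c) := fun _ _ _ => by unfold RedP; infer_instance

/-- Admissible consecutive pairs of colors along a red tight path with sea color `X`. -/
def pairOk (X a b : Fin 3) : Prop :=
  (a = X ∧ b = X) ∨ (a = X ∧ b = X + 1) ∨ (a = X + 1 ∧ b = X)

instance : ∀ X a b, Decidable (pairOk X a b) := fun _ _ _ => by unfold pairOk; infer_instance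

/-- Red signatures of color-count triples. -/
def RedCnt (x y z : ℕ) : Prop :=
  (x = 3 ∧ y = 0 ∧ z = 0) ∨ (x = 0 ∧ y = 3 ∧ z = 0) ∨ (x = 0 ∧ y = 0 ∧ z = 3) ∨
    (x = 2 ∧ y = 1 ∧ z = 0) ∨ (x = 0 ∧ y = 2 ∧ z = 1) ∨ (x = 1 ∧ y = 0 ∧ z = 2)

instance : ∀ x y z, Decidable (RedCnt x y z) := fun _ _ _ => by unfold RedCnt; infer_instance

/-- The red coloring induced by a vertex coloring `γ`. -/
def redOf {α : Type*} [DecidableEq α] (γ : α → Fin 3) (e : Finset α) : Prop :=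
  RedCnt ((e.filter (fun v => γ v = 0)).card) ((e.filter (fun v => γ v = 1)).card)
    ((e.filter (fun v => γ v = 2)).card)

lemma card_filter_triple {α : Type*} [DecidableEq α] (q : α → Prop) [DecidablePred q]
    {u v w : α} (huv : u ≠ v) (huw : u ≠ w) (hvw : v ≠ w) :
    (({u, v, w} : Finset α).filter q).card =
      (if q u then 1 else 0) + (if q v then 1 else 0) + (if q w then 1 else 0) := by
  rw [Finset.filter_insert, Finset.filter_insert, Finset.filter_singleton]
  split_ifs <;>
    simp_all [Finset.card_insert_of_notMem, Finset.mem_insert, Finset.mem_singleton]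

lemma redOf_triple {α : Type*} [DecidableEq α] (γ : α → Fin 3)
    {u v w : α} (huv : u ≠ v) (huw : u ≠ w) (hvw : v ≠ w) :
    redOf γ ({u, v, w} : Finset α) ↔ RedP (γ u) (γ v) (γ w) := by
  unfold redOf
  rw [card_filter_triple _ huv huw hvw, card_filter_triple _ huv huw hvw,
    card_filter_triple _ huv huw hvw]
  generalize γ u = a; generalize γ v = b; generalize γ w = c
  revert a b c; decide

set_option maxRecDepth 40000 in
/-- Every 3-coloring of the Fano plane has a line whose color multiset is a red pattern. -/
lemma fano_red : ∀ c0 c1 c2 c3 c4 c5 c6 : Fin 3,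
    RedP c0 c1 c2 ∨ RedP c0 c3 c4 ∨ RedP c0 c5 c6 ∨
      RedP c1 c3 c5 ∨ RedP c1 c4 c6 ∨ RedP c2 c3 c6 ∨
      RedP c2 c4 c5 := by decide

lemma getX : ∀ a b c : Fin 3, RedP a b c → ∃ X, pairOk X a b ∧ pairOk X b c := by decide

lemma pair_step : ∀ X a b c : Fin 3, pairOk X a b → RedP a b c → pairOk X b c := by decide

lemma pair_mem : ∀ X a b : Fin 3, pairOk X a b →
    (a = X ∨ a = X + 1) ∧ (b = X ∨ b = X + 1) := by decide

lemma no_adj : ∀ X : Fin 3, ¬ pairOk X (X + 1) (X + 1) := by decide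

lemma no_gap2 : ∀ X : Fin 3, ¬ RedP (X + 1) X (X + 1) := by decide

lemma notred1 : ∀ X : Fin 3, ¬ RedP (X + 1) (X + 1) X := by decide

lemma notred2 : ∀ X : Fin 3, ¬ RedP X (X + 1) (X + 1) := by decide

lemma ne_succ : ∀ X : Fin 3, X ≠ X + 1 := by decide

/-- Fibers of the mod-3 coloring on `Fin (2*n)` have size `2*m` when `n = 3*m`. -/
lemma fiber_card (n m : ℕ) (hm : n = 3 * m) (X : Fin 3) :
    ((Finset.univ : Finset (Fin (2 * n))).filter
      (fun v => (⟨v.val % 3, by omega⟩ : Fin 3) = X)).card = 2 * m := by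
  rw [show 2 * m = (Finset.range (2 * m)).card by rw [Finset.card_range]]
  have hX : (X : Fin 3).val < 3 := X.isLt
  exact Finset.card_bij' (fun v _ => v.val / 3)
    (fun k hk => (⟨3 * k + X.val, by
      have := Finset.mem_range.mp hk; omega⟩ : Fin (2 * n)))
    (fun v hv => by
      simp only [Finset.mem_filter, Finset.mem_univ, true_and, Fin.ext_iff] at hv
      have hvlt : v.val < 2 * n := v.isLt
      simp only [Finset.mem_range]
      omega)
    (fun k hk => by
      have hk' := Finset.mem_range.mp hk
      simp only [Finset.mem_filter, Finset.mem_univ, true_and, Fin.ext_iff]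
      omega)
    (fun v hv => by
      simp only [Finset.mem_filter, Finset.mem_univ, true_and, Fin.ext_iff] at hv
      have hvlt : v.val < 2 * n := v.isLt
      apply Fin.ext
      simp only
      omega)
    (fun k hk => by
      have hk' := Finset.mem_range.mp hk
      simp only
      omega)

/-- For `n` a sufficiently large multiple of 3, `R(P', F) > 2n`: there is a coloring of the
triples of a `2n`-element set with no red `P'` and no blue Fano plane. -/
theorem Pprime_fano_ramsey_gt_two_n :
    ∃ n0 : ℕ, ∀ n : ℕ, n0 ≤ n → 3 ∣ n →
      ∃ red : Finset (Fin (2 * n)) → Prop,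
        ¬ HasRedPprime red n ∧ ¬ HasBlueFano (fun e => ¬ red e) := by
  refine ⟨6, fun n hn hdvd => ?_⟩
  obtain ⟨m, hm⟩ := hdvd
  have hm2 : 2 ≤ m := by omega
  set part : Fin (2 * n) → Fin 3 := fun v => ⟨v.val % 3, by omega⟩ with hpart
  refine ⟨redOf part, ?_, ?_⟩
  · -- no red P'
    rintro ⟨f, hinj, hpath, he1, he2, he3⟩
    set p : ℕ → Fin 3 := fun i => part (f i) with hp
    have hne : ∀ i < n, ∀ j < n, i ≠ j → f i ≠ f j := by
      intro i hi j hj hij hfij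
      exact hij (hinj i hi j hj hfij)
    -- windows
    have hred : ∀ i, i + 2 < n → RedP (p i) (p (i + 1)) (p (i + 2)) := by
      intro i hi
      exact (redOf_triple part (hne i (by omega) (i+1) (by omega) (by omega))
        (hne i (by omega) (i+2) (by omega) (by omega))
        (hne (i+1) (by omega) (i+2) (by omega) (by omega))).mp (hpath i hi)
    have hE1 : RedP (p 1) (p 2) (p 5) :=
      (redOf_triple part (hne 1 (by omega) 2 (by omega) (by omega))
        (hne 1 (by omega) 5 (by omega) (by omega))
        (hne 2 (by omega) 5 (by omega) (by omega))).mp he1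
    have hE2 : RedP (p 0) (p 1) (p 4) :=
      (redOf_triple part (hne 0 (by omega) 1 (by omega) (by omega))
        (hne 0 (by omega) 4 (by omega) (by omega))
        (hne 1 (by omega) 4 (by omega) (by omega))).mp he2
    have hE3 : RedP (p 0) (p 3) (p 5) :=
      (redOf_triple part (hne 0 (by omega) 3 (by omega) (by omega))
        (hne 0 (by omega) 5 (by omega) (by omega))
        (hne 3 (by omega) 5 (by omega) (by omega))).mp he3
    obtain ⟨X, hQ0, -⟩ := getX _ _ _ (hred 0 (by omega))
    -- all consecutive pairs are admissible
    have hpair : ∀ i, i + 1 < n → pairOk X (p i) (p (i + 1)) := by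
      intro i
      induction i with
      | zero => intro _; exact hQ0
      | succ k ih =>
        intro h
        exact pair_step X _ _ _ (ih (by omega)) (hred k (by omega))
    have hmem : ∀ i < n, p i = X ∨ p i = X + 1 := by
      intro i hi
      rcases Nat.lt_or_ge (i + 1) n with h | h
      · exact (pair_mem X _ _ (hpair i h)).1
      · have hi1 : i - 1 + 1 < n := by omega
        have := (pair_mem X _ _ (hpair (i - 1) hi1)).2
        rwa [show i - 1 + 1 = i by omega] at this
    have hgap : ∀ i j, j < n → p i = X + 1 → p j = X + 1 → i < j → i + 3 ≤ j := by
      intro i j hj hpi hpj hij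
      by_contra hcon
      rcases (by omega : j = i + 1 ∨ j = i + 2) with rfl | rfl
      · have := hpair i (by omega)
        rw [hpi, hpj] at this
        exact no_adj X this
      · rcases hmem (i + 1) (by omega) with h1 | h1
        · have := hred i (by omega)
          rw [hpi, hpj, h1] at this
          exact no_gap2 X this
        · have := hpair i (by omega)
          rw [hpi, h1] at this
          exact no_adj X this
    -- counting
    set S : Finset ℕ := (Finset.range n).filter (fun i => p i = X + 1) with hS
    set T : Finset ℕ := (Finset.range n).filter (fun i => p i = X) with hT
    have hST : S.card + T.card = n := by
      have : T = (Finset.range n).filter (fun i => ¬ p i = X + 1) := by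
        apply Finset.filter_congr
        intro i hi
        simp only [Finset.mem_range] at hi
        constructor
        · intro h; rw [h]; exact (ne_succ X)
        · intro h; rcases hmem i hi with h' | h'; exact h'; exact absurd h' h
      rw [this, Finset.card_filter_add_card_filter_not, Finset.card_range]
    have hTcard : T.card ≤ 2 * m := by
      rw [← fiber_card n m hm X]
      apply Finset.card_le_card_of_injOn f
      · intro i hi
        simp only [hT, Finset.mem_coe, Finset.mem_filter, Finset.mem_range] at hi
        simp only [Finset.mem_coe, Finset.mem_filter, Finset.mem_univ, true_and]
        exact hi.2
      · intro i hi j hj hij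
        simp only [hT, Finset.coe_filter, Set.mem_setOf_eq, Finset.mem_range] at hi hj
        exact hinj i hi.1 j hj.1 hij
    have hSinj : Set.InjOn (fun i => i / 3) (S : Set ℕ) := by
      intro i hi j hj hij
      simp only [hS, Finset.coe_filter, Set.mem_setOf_eq, Finset.mem_range] at hi hj
      simp only at hij
      rcases lt_trichotomy i j with h | h | h
      · have := hgap i j hj.1 hi.2 hj.2 h; omega
      · exact h
      · have := hgap j i hi.1 hj.2 hi.2 h; omega
    have hScard : S.card ≤ m := by
      have := Finset.card_le_card_of_injOn (t := Finset.range m) (fun i => i / 3)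
        (fun i hi => by
          simp only [hS, Finset.mem_coe, Finset.mem_filter, Finset.mem_range] at hi
          simp only [Finset.mem_coe, Finset.mem_range]
          omega) hSinj
      rwa [Finset.card_range] at this
    have hSeq : S.card = m := by omega
    have himg : S.image (fun i => i / 3) = Finset.range m := by
      apply Finset.eq_of_subset_of_card_le
      · intro k hk
        simp only [Finset.mem_image] at hk
        obtain ⟨i, hi, rfl⟩ := hk
        simp only [hS, Finset.mem_filter, Finset.mem_range] at hi
        simp only [Finset.mem_range]
        omega
      · rw [Finset.card_range, Finset.card_image_of_injOn hSinj, hSeq]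
    have h0 : (0 : ℕ) ∈ S.image (fun i => i / 3) := by
      rw [himg]; simp only [Finset.mem_range]; omega
    have h1 : (1 : ℕ) ∈ S.image (fun i => i / 3) := by
      rw [himg]; simp only [Finset.mem_range]; omega
    simp only [Finset.mem_image] at h0 h1
    obtain ⟨i, hiS, hi3⟩ := h0
    obtain ⟨j, hjS, hj3⟩ := h1
    simp only [hS, Finset.mem_filter, Finset.mem_range] at hiS hjS
    have hiY : p i = X + 1 := hiS.2
    have hjY : p j = X + 1 := hjS.2
    have hi2 : i ≤ 2 := by omega
    have hj45 : 3 ≤ j ∧ j ≤ 5 := by omega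
    have hgapij : i + 3 ≤ j := hgap i j hjS.1 hiY hjY (by omega)
    -- a helper: positions near an S element are X
    have hXat : ∀ k < n, ∀ l < n, p l = X + 1 → k ≠ l → k < l + 3 → l < k + 3 → p k = X := by
      intro k hk l hln hl hkl h1 h2
      rcases hmem k hk with h | h
      · exact h
      · rcases Nat.lt_or_ge k l with hlt | hge
        · have := hgap k l hln h hl hlt; omega
        · have := hgap l k hk hl h (by omega); omega
    have hcases : (i = 0 ∧ j = 3) ∨ (i = 0 ∧ j = 4) ∨ (i = 0 ∧ j = 5) ∨
        (i = 1 ∧ j = 4) ∨ (i = 1 ∧ j = 5) ∨ (i = 2 ∧ j = 5) := by omega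
    rcases hcases with ⟨rfl, rfl⟩ | ⟨rfl, rfl⟩ | ⟨rfl, rfl⟩ | ⟨rfl, rfl⟩ | ⟨rfl, rfl⟩ | ⟨rfl, rfl⟩
    · have h5 : p 5 = X := hXat 5 (by omega) 3 (by omega) hjY (by omega) (by omega) (by omega)
      rw [hiY, hjY, h5] at hE3
      exact notred1 X hE3
    · have h1' : p 1 = X := hXat 1 (by omega) 0 (by omega) hiY (by omega) (by omega) (by omega)
      rw [hiY, hjY, h1'] at hE2
      exact no_gap2 X hE2
    · have h3' : p 3 = X := hXat 3 (by omega) 5 (by omega) hjY (by omega) (by omega) (by omega)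
      rw [hiY, hjY, h3'] at hE3
      exact no_gap2 X hE3
    · have h0' : p 0 = X := hXat 0 (by omega) 1 (by omega) hiY (by omega) (by omega) (by omega)
      rw [hiY, hjY, h0'] at hE2
      exact notred2 X hE2
    · have h2' : p 2 = X := hXat 2 (by omega) 1 (by omega) hiY (by omega) (by omega) (by omega)
      rw [hiY, hjY, h2'] at hE1
      exact no_gap2 X hE1
    · have h1' : p 1 = X := hXat 1 (by omega) 2 (by omega) hiY (by omega) (by omega) (by omega)
      rw [hiY, hjY, h1'] at hE1
      exact notred2 X hE1
  · -- no blue Fano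
    rintro ⟨f, hinj, hblue⟩
    have hne : ∀ i j : Fin 7, i ≠ j → f i ≠ f j := fun i j hij h => hij (hinj h)
    have key : ∀ i j k : Fin 7, i ≠ j → i ≠ k → j ≠ k →
        ({i, j, k} : Finset (Fin 7)) ∈ fanoLines →
        ¬ RedP (part (f i)) (part (f j)) (part (f k)) := by
      intro i j k hij hik hjk hL hR
      apply hblue _ hL
      rw [show ({i, j, k} : Finset (Fin 7)).image f = {f i, f j, f k} by
        simp [Finset.image_insert, Finset.image_singleton]]
      exact (redOf_triple part (hne i j hij) (hne i k hik) (hne j k hjk)).mpr hR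
    rcases fano_red (part (f 0)) (part (f 1)) (part (f 2)) (part (f 3)) (part (f 4))
        (part (f 5)) (part (f 6)) with h | h | h | h | h | h | h
    · exact key 0 1 2 (by decide) (by decide) (by decide) (by decide) h
    · exact key 0 3 4 (by decide) (by decide) (by decide) (by decide) h
    · exact key 0 5 6 (by decide) (by decide) (by decide) (by decide) h
    · exact key 1 3 5 (by decide) (by decide) (by decide) (by decide) h
    · exact key 1 4 6 (by decide) (by decide) (by decide) (by decide) h
    · exact key 2 3 6 (by decide) (by decide) (by decide) (by decide) h
    · exact key 2 4 5 (by decide) (by decide) (by decide) (by decide) h
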